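/- The Poincaré lifting R_a maps polynomial vector fields of degree at most p to polynomial vector fields of degree at most p+1. -/
import Mathlib


open MeasureTheory

/-- Partial derivative of a scalar function on ℝ³. -/
noncomputable def pd3 (f : (Fin 3 → ℝ) → ℝ) (i : Fin 3) (x : Fin 3 → ℝ) : ℝ :=
  fderiv ℝ f x (Pi.single i 1)

/-- Curl of a vector field on ℝ³. -/
noncomputable def curl3 (u : (Fin 3 → ℝ) → (Fin 3 → ℝ)) (x : Fin 3 → ℝ) : Fin 3 → ℝ :=
  ![pd3 (fun y => u y 2) 1 x - pd3 (fun y => u y 1) 2 x,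
    pd3 (fun y => u y 0) 2 x - pd3 (fun y => u y 2) 0 x,
    pd3 (fun y => u y 1) 0 x - pd3 (fun y => u y 0) 1 x]

/-- Divergence of a vector field on ℝ³. -/
noncomputable def div3 (u : (Fin 3 → ℝ) → (Fin 3 → ℝ)) (x : Fin 3 → ℝ) : ℝ :=
  ∑ i, pd3 (fun y => u y i) i x

/-- Gradient of a scalar field on ℝ³. -/
noncomputable def grad3 (f : (Fin 3 → ℝ) → ℝ) (x : Fin 3 → ℝ) : Fin 3 → ℝ :=
  fun i => pd3 f i x

/-- Cross product in ℝ³. -/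
def cross3 (a b : Fin 3 → ℝ) : Fin 3 → ℝ :=
  ![a 1 * b 2 - a 2 * b 1, a 2 * b 0 - a 0 * b 2, a 0 * b 1 - a 1 * b 0]

/-- Euclidean dot product in ℝ³. -/
def dot3 (a b : Fin 3 → ℝ) : ℝ := ∑ i, a i * b i

/-- `f` is (given by) a polynomial of total degree ≤ p. -/
def IsPoly3 (p : ℕ) (f : (Fin 3 → ℝ) → ℝ) : Prop :=
  ∃ q : MvPolynomial (Fin 3) ℝ, q.totalDegree ≤ p ∧ ∀ x, f x = MvPolynomial.eval x q

/-- Vector field whose components are polynomials of total degree ≤ p. -/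
def IsPolyVec3 (p : ℕ) (u : (Fin 3 → ℝ) → (Fin 3 → ℝ)) : Prop :=
  ∀ i, IsPoly3 p (fun x => u x i)

/-- First-family Nédélec space of degree p (as a set of vector fields). -/
def NedelecW1 (p : ℕ) : Set ((Fin 3 → ℝ) → (Fin 3 → ℝ)) :=
  {v | ∃ P Q, IsPolyVec3 p P ∧ IsPolyVec3 p Q ∧ ∀ x, v x = P x + cross3 (Q x) x}

/-- Face-element (second family) space of degree p. -/
def NedelecW2 (p : ℕ) : Set ((Fin 3 → ℝ) → (Fin 3 → ℝ)) :=
  {v | ∃ P q, IsPolyVec3 p P ∧ IsPoly3 p q ∧ ∀ x, v x = P x + q x • x}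

/-- Poincaré lifting with center a. -/
noncomputable def Rlift (a : Fin 3 → ℝ) (u : (Fin 3 → ℝ) → (Fin 3 → ℝ))
    (x : Fin 3 → ℝ) : Fin 3 → ℝ :=
  cross3 (∫ t in (0:ℝ)..1, t • u (a + t • (x - a))) (x - a)

/-- Degree-2 Poincaré lifting with center a. -/
noncomputable def Dlift (a : Fin 3 → ℝ) (u : (Fin 3 → ℝ) → ℝ)
    (x : Fin 3 → ℝ) : Fin 3 → ℝ :=
  (∫ t in (0:ℝ)..1, t ^ 2 * u (a + t • (x - a))) • (x - a)



section AuxPoincare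

open MvPolynomial Finset

lemma my_totalDegree_aeval_le (f : Fin 3 → MvPolynomial (Fin 3) ℝ)
    (hf : ∀ i, (f i).totalDegree ≤ 1) (q : MvPolynomial (Fin 3) ℝ) :
    (MvPolynomial.aeval f q).totalDegree ≤ q.totalDegree := by
  rw [MvPolynomial.aeval_def, MvPolynomial.eval₂_eq]
  refine (MvPolynomial.totalDegree_finset_sum _ _).trans ?_
  apply Finset.sup_le
  intro d hd
  refine (MvPolynomial.totalDegree_mul _ _).trans ?_
  have h1 : (algebraMap ℝ (MvPolynomial (Fin 3) ℝ) (MvPolynomial.coeff d q)).totalDegree = 0 := by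
    rw [MvPolynomial.algebraMap_eq, MvPolynomial.totalDegree_C]
  rw [h1, zero_add]
  refine (MvPolynomial.totalDegree_finset_prod _ _).trans ?_
  calc ∑ i ∈ d.support, (f i ^ d i).totalDegree
      ≤ ∑ i ∈ d.support, d i * 1 := Finset.sum_le_sum fun i _ =>
        (MvPolynomial.totalDegree_pow _ _).trans (Nat.mul_le_mul_left _ (hf i))
    _ = ∑ i ∈ d.support, d i := by simp
    _ ≤ q.totalDegree := MvPolynomial.le_totalDegree hd

lemma my_eval_aeval (x : Fin 3 → ℝ) (f : Fin 3 → MvPolynomial (Fin 3) ℝ)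
    (q : MvPolynomial (Fin 3) ℝ) :
    MvPolynomial.eval x (MvPolynomial.aeval f q)
      = MvPolynomial.eval (fun i => MvPolynomial.eval x (f i)) q := by
  rw [MvPolynomial.aeval_def, MvPolynomial.algebraMap_eq,
    MvPolynomial.eval₂_comp_left (MvPolynomial.eval x) MvPolynomial.C f q]
  congr 1
  ext r : 1
  simp

lemma my_eval_smul {n : ℕ} {φ : MvPolynomial (Fin 3) ℝ} (h : φ.IsHomogeneous n)
    (t : ℝ) (z : Fin 3 → ℝ) :
    MvPolynomial.eval (t • z) φ = t ^ n * MvPolynomial.eval z φ := by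
  rw [MvPolynomial.eval_eq, MvPolynomial.eval_eq, Finset.mul_sum]
  refine Finset.sum_congr rfl fun d hd => ?_
  have hdn : ∑ i ∈ d.support, d i = n := by
    have := h (MvPolynomial.mem_support_iff.mp hd)
    simpa [Finsupp.weight_apply, Finsupp.sum] using this
  calc MvPolynomial.coeff d φ * ∏ i ∈ d.support, (t • z) i ^ d i
      = MvPolynomial.coeff d φ * ((∏ i ∈ d.support, t ^ d i) * ∏ i ∈ d.support, z i ^ d i) := by
        rw [← Finset.prod_mul_distrib]
        simp [mul_pow]
    _ = t ^ n * (MvPolynomial.coeff d φ * ∏ i ∈ d.support, z i ^ d i) := by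
        rw [Finset.prod_pow_eq_pow_sum, hdn]; ring

lemma my_integral_poly (a : Fin 3 → ℝ) (p : ℕ) (q : MvPolynomial (Fin 3) ℝ)
    (hq : q.totalDegree ≤ p) :
    ∃ r : MvPolynomial (Fin 3) ℝ, r.totalDegree ≤ p ∧
      ∀ x : Fin 3 → ℝ,
        (∫ t in (0:ℝ)..1, t * MvPolynomial.eval (a + t • (x - a)) q)
          = MvPolynomial.eval x r := by
  classical
  set Q : MvPolynomial (Fin 3) ℝ :=
    MvPolynomial.aeval (fun i => MvPolynomial.X i + MvPolynomial.C (a i)) q with hQdef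
  have hXC : ∀ b : ℝ, ∀ i : Fin 3,
      (MvPolynomial.X (R := ℝ) i + MvPolynomial.C b).totalDegree ≤ 1 := by
    intro b i
    refine (MvPolynomial.totalDegree_add _ _).trans ?_
    simp [MvPolynomial.totalDegree_X, MvPolynomial.totalDegree_C]
  have hXCs : ∀ b : ℝ, ∀ i : Fin 3,
      (MvPolynomial.X (R := ℝ) i - MvPolynomial.C b).totalDegree ≤ 1 := by
    intro b i
    refine (MvPolynomial.totalDegree_sub _ _).trans ?_
    simp [MvPolynomial.totalDegree_X, MvPolynomial.totalDegree_C]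
  have hQ : Q.totalDegree ≤ p :=
    (my_totalDegree_aeval_le _ (fun i => hXC (a i) i) q).trans hq
  set N := Q.totalDegree + 1 with hN
  set c : ℕ → MvPolynomial (Fin 3) ℝ := fun k =>
    MvPolynomial.aeval (fun i => MvPolynomial.X i - MvPolynomial.C (a i))
      (MvPolynomial.homogeneousComponent k Q) with hc
  have hcdeg : ∀ k, k ∈ Finset.range N → (c k).totalDegree ≤ p := by
    intro k hk
    refine (my_totalDegree_aeval_le _ (fun i => hXCs (a i) i) _).trans ?_
    refine le_trans ((MvPolynomial.homogeneousComponent_isHomogeneous k Q).totalDegree_le) ?_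
    have : k ≤ Q.totalDegree := Nat.lt_succ_iff.mp (Finset.mem_range.mp hk)
    omega
  refine ⟨∑ k ∈ Finset.range N, (((k : ℝ) + 2)⁻¹) • c k, ?_, ?_⟩
  · refine (MvPolynomial.totalDegree_finset_sum _ _).trans ?_
    exact Finset.sup_le fun k hk =>
      (MvPolynomial.totalDegree_smul_le _ _).trans (hcdeg k hk)
  · intro x
    have key : ∀ t : ℝ, MvPolynomial.eval (a + t • (x - a)) q
        = ∑ k ∈ Finset.range N, t ^ k * MvPolynomial.eval x (c k) := by
      intro t
      have h1 : MvPolynomial.eval (a + t • (x - a)) q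
          = MvPolynomial.eval (t • (x - a)) Q := by
        rw [hQdef, my_eval_aeval]
        refine congrArg (fun v => MvPolynomial.eval v q) (funext fun i => ?_)
        simp [Pi.smul_apply, Pi.sub_apply, Pi.add_apply]
        ring
      rw [h1]
      conv_lhs => rw [← MvPolynomial.sum_homogeneousComponent Q]
      rw [map_sum]
      refine Finset.sum_congr rfl fun k hk => ?_
      rw [my_eval_smul (MvPolynomial.homogeneousComponent_isHomogeneous k Q)]
      congr 1
      rw [hc, my_eval_aeval]
      exact congrArg (fun v => MvPolynomial.eval v (MvPolynomial.homogeneousComponent k Q))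
        (funext fun i => by simp)
    have hcont : ∀ k : ℕ, IntervalIntegrable
        (fun t : ℝ => MvPolynomial.eval x (c k) * t ^ (k + 1)) volume 0 1 := by
      intro k
      exact (continuous_const.mul (continuous_pow _)).intervalIntegrable 0 1
    calc (∫ t in (0:ℝ)..1, t * MvPolynomial.eval (a + t • (x - a)) q)
        = ∫ t in (0:ℝ)..1, ∑ k ∈ Finset.range N,
            MvPolynomial.eval x (c k) * t ^ (k + 1) := by
          refine intervalIntegral.integral_congr fun t _ => ?_
          rw [key t, Finset.mul_sum]
          exact Finset.sum_congr rfl fun k _ => by ring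
      _ = ∑ k ∈ Finset.range N, ∫ t in (0:ℝ)..1,
            MvPolynomial.eval x (c k) * t ^ (k + 1) :=
          intervalIntegral.integral_finset_sum fun k _ => hcont k
      _ = ∑ k ∈ Finset.range N, MvPolynomial.eval x (c k) * (((k : ℝ) + 2)⁻¹) := by
          refine Finset.sum_congr rfl fun k _ => ?_
          rw [intervalIntegral.integral_const_mul, integral_pow]
          congr 1
          rw [zero_pow (by omega), one_pow]
          push_cast
          ring
      _ = MvPolynomial.eval x (∑ k ∈ Finset.range N, (((k : ℝ) + 2)⁻¹) • c k) := by
          rw [map_sum]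
          exact Finset.sum_congr rfl fun k _ => by
            rw [MvPolynomial.smul_eval]; ring


lemma my_combo (p : ℕ) (f g : MvPolynomial (Fin 3) ℝ)
    (hf : f.totalDegree ≤ p) (hg : g.totalDegree ≤ p) (j k : Fin 3) (b c : ℝ)
    (F : (Fin 3 → ℝ) → ℝ)
    (hF : ∀ x, F x = MvPolynomial.eval x f * (x j - b) - MvPolynomial.eval x g * (x k - c)) :
    IsPoly3 (p + 1) F := by
  refine ⟨f * (MvPolynomial.X j - MvPolynomial.C b) - g * (MvPolynomial.X k - MvPolynomial.C c),
    ?_, ?_⟩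
  · refine (MvPolynomial.totalDegree_sub _ _).trans (max_le ?_ ?_) <;>
    · refine (MvPolynomial.totalDegree_mul _ _).trans ?_
      have h1 : (MvPolynomial.X (R := ℝ) j - MvPolynomial.C b).totalDegree ≤ 1 := by
        refine (MvPolynomial.totalDegree_sub _ _).trans ?_
        simp [MvPolynomial.totalDegree_X, MvPolynomial.totalDegree_C]
      have h2 : (MvPolynomial.X (R := ℝ) k - MvPolynomial.C c).totalDegree ≤ 1 := by
        refine (MvPolynomial.totalDegree_sub _ _).trans ?_
        simp [MvPolynomial.totalDegree_X, MvPolynomial.totalDegree_C]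
      first
      | exact add_le_add hf h1
      | exact add_le_add hg h2
  · intro x
    rw [hF]
    simp

end AuxPoincare

/-- The Poincaré lifting `Rlift a` maps polynomial vector fields of
degree ≤ p to polynomial vector fields of degree ≤ p+1. -/
theorem poincare_lifting_poly (a : Fin 3 → ℝ) (p : ℕ)
    (u : (Fin 3 → ℝ) → (Fin 3 → ℝ)) (hu : IsPolyVec3 p u) :
    IsPolyVec3 (p + 1) (Rlift a u) := by
  classical
  choose q hdeg heq using hu
  choose r hrdeg hr using fun j => my_integral_poly a p (q j) (hdeg j)
  have hA : ∀ (x : Fin 3 → ℝ) (j : Fin 3),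
      (∫ t in (0:ℝ)..1, t • u (a + t • (x - a))) j = MvPolynomial.eval x (r j) := by
    intro x j
    have hucong : (fun t : ℝ => t • u (a + t • (x - a)))
        = fun t : ℝ => t • (fun i => MvPolynomial.eval (a + t • (x - a)) (q i)) := by
      funext t
      congr 1
      funext i
      exact heq i (a + t • (x - a))
    rw [hucong]
    have hcont : Continuous
        (fun t : ℝ => t • (fun i => MvPolynomial.eval (a + t • (x - a)) (q i) : Fin 3 → ℝ)) := by
      refine continuous_id.smul (continuous_pi fun i => ?_)
      exact (MvPolynomial.continuous_eval _).comp
        (continuous_const.add (continuous_id.smul continuous_const))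
    have hint : IntervalIntegrable
        (fun t : ℝ => t • (fun i => MvPolynomial.eval (a + t • (x - a)) (q i) : Fin 3 → ℝ))
        MeasureTheory.volume 0 1 := hcont.intervalIntegrable 0 1
    have hproj := (ContinuousLinearMap.proj (R := ℝ) (φ := fun _ : Fin 3 => ℝ) j
      ).intervalIntegral_comp_comm hint
    have hproj' : (∫ t in (0:ℝ)..1,
        t • (fun i => MvPolynomial.eval (a + t • (x - a)) (q i) : Fin 3 → ℝ)) j
        = ∫ t in (0:ℝ)..1, t * MvPolynomial.eval (a + t • (x - a)) (q j) := by
      simp only [ContinuousLinearMap.proj_apply] at hproj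
      rw [← hproj]
      simp [Pi.smul_apply, smul_eq_mul]
    rw [hproj', hr j x]
  have hRl : ∀ (x : Fin 3 → ℝ) (i : Fin 3), Rlift a u x i
      = cross3 (fun j => MvPolynomial.eval x (r j)) (x - a) i := by
    intro x i
    unfold Rlift
    congr 2
    funext j
    exact hA x j
  intro i
  fin_cases i
  · refine my_combo p (r 1) (r 2) (hrdeg 1) (hrdeg 2) 2 1 (a 2) (a 1) _ fun x => ?_
    rw [hRl]
    simp [cross3]
  · refine my_combo p (r 2) (r 0) (hrdeg 2) (hrdeg 0) 0 2 (a 0) (a 2) _ fun x => ?_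
    rw [hRl]
    simp [cross3]
  · refine my_combo p (r 0) (r 1) (hrdeg 0) (hrdeg 1) 1 0 (a 1) (a 0) _ fun x => ?_
    rw [hRl]
    simp [cross3]
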